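/- Let G and H be finitely presented groups with Dehn functions δ_G and δ_H. Then the Dehn function of the direct product satisfies δ_{G×H}(n) ≼ n² + δ_G(n) + δ_H(n), where ≼ is the standard asymptotic comparison of Dehn functions. -/

import Mathlib

/-- `w` is a product of `k` conjugates of relators of `rels` or their inverses. -/
def AreaRep {α : Type*} (rels : Set (FreeGroup α)) (w : FreeGroup α) (k : ℕ) : Prop :=
  ∃ (f r : Fin k → FreeGroup α) (ε : Fin k → ℤ),
    (∀ i, r i ∈ rels) ∧ (∀ i, ε i = 1 ∨ ε i = -1) ∧
    w = (List.ofFn fun i => f i * r i ^ ε i * (f i)⁻¹).prod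

/-- The area of a word representing the identity: the minimal number of conjugates of
relators needed to express it. -/
noncomputable def GArea {α : Type*} (rels : Set (FreeGroup α)) (w : FreeGroup α) : ℕ :=
  sInf {k | AreaRep rels w k}

/-- The Dehn function of the presentation `⟨α ∣ rels⟩`. -/
noncomputable def DehnFunction (α : Type*) [DecidableEq α] (rels : Set (FreeGroup α))
    (n : ℕ) : ℕ :=
  sSup {a | ∃ w : FreeGroup α,
    (FreeGroup.toWord w).length ≤ n ∧ (∃ k, AreaRep rels w k) ∧ a = GArea rels w}

def DehnPreceq (f g : ℕ → ℕ) : Prop :=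
  ∃ C : ℕ, 0 < C ∧ ∀ n, f n ≤ C * g (C * n) + C * n + C

/-- The relations of the product presentation of `G × H`: the relators of `G`, the relators
of `H`, and the commutators of generators of `G` with generators of `H`. -/
def ProdRels (α β : Type*) (R : Set (FreeGroup α)) (S : Set (FreeGroup β)) :
    Set (FreeGroup (α ⊕ β)) :=
  (⇑(FreeGroup.map Sum.inl) '' R) ∪ (⇑(FreeGroup.map Sum.inr) '' S) ∪
    {x | ∃ (a : α) (b : β),
      x = FreeGroup.of (Sum.inl a) * FreeGroup.of (Sum.inr b) *
          (FreeGroup.of (Sum.inl a))⁻¹ * (FreeGroup.of (Sum.inr b))⁻¹}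

set_option linter.unusedSectionVars false

namespace DehnAux


open FreeGroup

variable {α β γ : Type*}

def IsConjRel (rels : Set (FreeGroup α)) (x : FreeGroup α) : Prop :=
  ∃ (g r : FreeGroup α) (e : ℤ), r ∈ rels ∧ (e = 1 ∨ e = -1) ∧ x = g * r ^ e * g⁻¹

theorem areaRep_iff {rels : Set (FreeGroup α)} {w : FreeGroup α} {k : ℕ} :
    AreaRep rels w k ↔ ∃ L : List (FreeGroup α),
      L.length = k ∧ (∀ x ∈ L, IsConjRel rels x) ∧ w = L.prod := by
  constructor
  · rintro ⟨f, r, ε, h1, h2, h3⟩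
    refine ⟨List.ofFn fun i => f i * r i ^ ε i * (f i)⁻¹, by simp, ?_, h3⟩
    intro x hx
    rw [List.mem_ofFn] at hx
    obtain ⟨i, rfl⟩ := hx
    exact ⟨f i, r i, ε i, h1 i, h2 i, rfl⟩
  · rintro ⟨L, rfl, hL, rfl⟩
    choose g r e hr he hx using fun (i : Fin L.length) => hL (L.get i) (L.get_mem i)
    refine ⟨g, r, e, hr, he, ?_⟩
    have : L = List.ofFn fun i => g i * r i ^ e i * (g i)⁻¹ := by
      apply List.ext_getElem (by simp)
      intro i h1 h2
      rw [List.getElem_ofFn]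
      exact hx ⟨i, h1⟩
    exact congrArg List.prod this

theorem areaRep_one (rels : Set (FreeGroup α)) : AreaRep rels 1 0 :=
  areaRep_iff.2 ⟨[], rfl, by simp, rfl⟩

theorem areaRep_single {rels : Set (FreeGroup α)} {x : FreeGroup α}
    (h : IsConjRel rels x) : AreaRep rels x 1 :=
  areaRep_iff.2 ⟨[x], rfl, by simpa using h, by simp⟩

theorem areaRep_mul {rels : Set (FreeGroup α)} {w₁ w₂ : FreeGroup α} {k₁ k₂ : ℕ}
    (h1 : AreaRep rels w₁ k₁) (h2 : AreaRep rels w₂ k₂) :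
    AreaRep rels (w₁ * w₂) (k₁ + k₂) := by
  obtain ⟨L₁, hl₁, hm₁, hp₁⟩ := areaRep_iff.1 h1
  obtain ⟨L₂, hl₂, hm₂, hp₂⟩ := areaRep_iff.1 h2
  refine areaRep_iff.2 ⟨L₁ ++ L₂, by simp [hl₁, hl₂], ?_, by
    rw [hp₁, hp₂, List.prod_append]⟩
  intro x hx
  rcases List.mem_append.1 hx with h | h
  exacts [hm₁ x h, hm₂ x h]

theorem isConjRel_conj {rels : Set (FreeGroup α)} {x : FreeGroup α}
    (h : IsConjRel rels x) (g : FreeGroup α) : IsConjRel rels (g * x * g⁻¹) := by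
  obtain ⟨h0, r, e, hr, he, rfl⟩ := h
  exact ⟨g * h0, r, e, hr, he, by group⟩

theorem conj_prod (g : FreeGroup α) (L : List (FreeGroup α)) :
    (L.map fun x => g * x * g⁻¹).prod = g * L.prod * g⁻¹ := by
  induction L with
  | nil => simp
  | cons a L ih => simp only [List.map_cons, List.prod_cons, ih]; group

theorem areaRep_conj {rels : Set (FreeGroup α)} {w : FreeGroup α} {k : ℕ}
    (g : FreeGroup α) (h : AreaRep rels w k) : AreaRep rels (g * w * g⁻¹) k := by
  obtain ⟨L, hl, hm, hp⟩ := areaRep_iff.1 h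
  refine areaRep_iff.2 ⟨L.map fun x => g * x * g⁻¹, by simp [hl], ?_, ?_⟩
  · intro x hx
    obtain ⟨y, hy, rfl⟩ := List.mem_map.1 hx
    exact isConjRel_conj (hm y hy) g
  · rw [hp]
    exact (conj_prod g L).symm

theorem areaRep_map {rels : Set (FreeGroup α)} {rels' : Set (FreeGroup γ)}
    (φ : FreeGroup α →* FreeGroup γ) (hφ : ∀ r ∈ rels, φ r ∈ rels')
    {w : FreeGroup α} {k : ℕ} (h : AreaRep rels w k) : AreaRep rels' (φ w) k := by
  obtain ⟨f, r, ε, h1, h2, h3⟩ := h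
  refine ⟨fun i => φ (f i), fun i => φ (r i), ε, fun i => hφ _ (h1 i), h2, ?_⟩
  rw [h3, map_list_prod, List.map_ofFn]
  refine congrArg List.prod (congrArg List.ofFn (funext fun i => ?_))
  simp [Function.comp, map_zpow]

theorem exists_areaRep_of_forall {rels : Set (FreeGroup α)} (L : List (FreeGroup α))
    (h : ∀ x ∈ L, IsConjRel rels x ∨ x = 1) : ∃ k, AreaRep rels L.prod k := by
  induction L with
  | nil => exact ⟨0, by simpa using areaRep_one rels⟩
  | cons a L ih =>
    obtain ⟨k, hk⟩ := ih fun x hx => h x (List.mem_cons_of_mem a hx)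
    rcases h a List.mem_cons_self with ha | ha
    · exact ⟨1 + k, by rw [List.prod_cons]; exact areaRep_mul (areaRep_single ha) hk⟩
    · exact ⟨k, by rw [List.prod_cons, ha, one_mul]; exact hk⟩



variable {α β : Type*}

/-- Projection to the first factor. -/
def pA : FreeGroup (α ⊕ β) →* FreeGroup α :=
  FreeGroup.lift (Sum.elim FreeGroup.of fun _ => 1)

/-- Projection to the second factor. -/
def pB : FreeGroup (α ⊕ β) →* FreeGroup β :=
  FreeGroup.lift (Sum.elim (fun _ => 1) FreeGroup.of)

@[simp] theorem pA_of_inl (a : α) : pA (of (Sum.inl a) : FreeGroup (α ⊕ β)) = of a := by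
  simp [pA, lift_apply_of]

@[simp] theorem pA_of_inr (b : β) : pA (of (Sum.inr b) : FreeGroup (α ⊕ β)) = 1 := by
  simp [pA, lift_apply_of]

@[simp] theorem pB_of_inl (a : α) : pB (of (Sum.inl a) : FreeGroup (α ⊕ β)) = 1 := by
  simp [pB, lift_apply_of]

@[simp] theorem pB_of_inr (b : β) : pB (of (Sum.inr b) : FreeGroup (α ⊕ β)) = of b := by
  simp [pB, lift_apply_of]

theorem pA_inl (u : FreeGroup α) : pA (FreeGroup.map Sum.inl u : FreeGroup (α ⊕ β)) = u := by
  have : (pA : FreeGroup (α ⊕ β) →* FreeGroup α).comp (FreeGroup.map Sum.inl)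
      = MonoidHom.id _ := ext_hom _ _ (fun a => by simp [map.of])
  exact DFunLike.congr_fun this u

theorem pA_inr (v : FreeGroup β) : pA (FreeGroup.map Sum.inr v : FreeGroup (α ⊕ β)) = 1 := by
  have : (pA : FreeGroup (α ⊕ β) →* FreeGroup α).comp (FreeGroup.map Sum.inr)
      = 1 := ext_hom _ _ (fun b => by simp [map.of])
  exact DFunLike.congr_fun this v

theorem pB_inl (u : FreeGroup α) : pB (FreeGroup.map Sum.inl u : FreeGroup (α ⊕ β)) = 1 := by
  have : (pB : FreeGroup (α ⊕ β) →* FreeGroup β).comp (FreeGroup.map Sum.inl)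
      = 1 := ext_hom _ _ (fun a => by simp [map.of])
  exact DFunLike.congr_fun this u

theorem pB_inr (v : FreeGroup β) : pB (FreeGroup.map Sum.inr v : FreeGroup (α ⊕ β)) = v := by
  have : (pB : FreeGroup (α ⊕ β) →* FreeGroup β).comp (FreeGroup.map Sum.inr)
      = MonoidHom.id _ := ext_hom _ _ (fun b => by simp [map.of])
  exact DFunLike.congr_fun this v

theorem mk_single {γ : Type*} (x : γ) (d : Bool) :
    FreeGroup.mk [(x, d)] = FreeGroup.of x ^ (cond d (1 : ℤ) (-1)) := by
  cases d
  · show FreeGroup.mk [(x, false)] = FreeGroup.of x ^ (-1 : ℤ)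
    rw [zpow_neg_one]
    rfl
  · show FreeGroup.mk [(x, true)] = FreeGroup.of x ^ (1 : ℤ)
    rw [zpow_one]
    rfl

variable [DecidableEq α] [DecidableEq β]

theorem norm_single_pA (x : α ⊕ β) (d : Bool) :
    norm (pA (FreeGroup.mk [(x, d)]) : FreeGroup α) ≤ 1 := by
  rw [mk_single, map_zpow]
  cases x <;> cases d <;> simp

theorem norm_single_pB (x : α ⊕ β) (d : Bool) :
    norm (pB (FreeGroup.mk [(x, d)]) : FreeGroup β) ≤ 1 := by
  rw [mk_single, map_zpow]
  cases x <;> cases d <;> simp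

theorem mk_cons {γ : Type*} (x : γ × Bool) (L : List (γ × Bool)) :
    FreeGroup.mk (x :: L) = FreeGroup.mk [x] * FreeGroup.mk L := by
  rw [mul_mk]; rfl

theorem norm_pA_le : ∀ L : List ((α ⊕ β) × Bool), norm (pA (FreeGroup.mk L) : FreeGroup α) ≤ L.length := by
  intro L
  induction L with
  | nil =>
    have : FreeGroup.mk ([] : List ((α ⊕ β) × Bool)) = 1 := rfl
    simp [this]
  | cons x L ih =>
    rw [mk_cons, MonoidHom.map_mul]
    calc norm (pA (FreeGroup.mk [x]) * pA (FreeGroup.mk L))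
        ≤ norm (pA (FreeGroup.mk [x]) : FreeGroup α) + norm (pA (FreeGroup.mk L) : FreeGroup α) :=
          norm_mul_le _ _
      _ ≤ 1 + L.length := add_le_add (norm_single_pA x.1 x.2) ih
      _ = (x :: L).length := by simp [Nat.add_comm]

theorem norm_pB_le : ∀ L : List ((α ⊕ β) × Bool), norm (pB (FreeGroup.mk L) : FreeGroup β) ≤ L.length := by
  intro L
  induction L with
  | nil =>
    have : FreeGroup.mk ([] : List ((α ⊕ β) × Bool)) = 1 := rfl
    simp [this]
  | cons x L ih =>
    rw [mk_cons, MonoidHom.map_mul]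
    calc norm (pB (FreeGroup.mk [x]) * pB (FreeGroup.mk L))
        ≤ norm (pB (FreeGroup.mk [x]) : FreeGroup β) + norm (pB (FreeGroup.mk L) : FreeGroup β) :=
          norm_mul_le _ _
      _ ≤ 1 + L.length := add_le_add (norm_single_pB x.1 x.2) ih
      _ = (x :: L).length := by simp [Nat.add_comm]

section Swap


variable (R : Set (FreeGroup α)) (S : Set (FreeGroup β))

theorem comm_mem (a : α) (b : β) :
    FreeGroup.of (Sum.inl a) * FreeGroup.of (Sum.inr b) *
      (FreeGroup.of (Sum.inl a))⁻¹ * (FreeGroup.of (Sum.inr b))⁻¹ ∈ ProdRels α β R S :=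
  Or.inr ⟨a, b, rfl⟩

theorem swap_single (a : α) (b : β) (d e : ℤ) (hd : d = 1 ∨ d = -1) (he : e = 1 ∨ e = -1) :
    ∃ c : FreeGroup (α ⊕ β),
      FreeGroup.of (Sum.inr b) ^ e * FreeGroup.of (Sum.inl a) ^ d =
        FreeGroup.of (Sum.inl a) ^ d * FreeGroup.of (Sum.inr b) ^ e * c ∧
      IsConjRel (ProdRels α β R S) c := by
  set A := FreeGroup.of (Sum.inl a : α ⊕ β) with hA
  set B := FreeGroup.of (Sum.inr b : α ⊕ β) with hB
  rcases hd with rfl | rfl <;> rcases he with rfl | rfl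
  · exact ⟨(A⁻¹ * B⁻¹) * (A * B * A⁻¹ * B⁻¹) ^ (-1 : ℤ) * (A⁻¹ * B⁻¹)⁻¹,
      by group, ⟨A⁻¹ * B⁻¹, _, -1, comm_mem R S a b, Or.inr rfl, rfl⟩⟩
  · exact ⟨A⁻¹ * (A * B * A⁻¹ * B⁻¹) ^ (1 : ℤ) * (A⁻¹)⁻¹,
      by group, ⟨A⁻¹, _, 1, comm_mem R S a b, Or.inl rfl, rfl⟩⟩
  · exact ⟨B⁻¹ * (A * B * A⁻¹ * B⁻¹) ^ (1 : ℤ) * (B⁻¹)⁻¹,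
      by group, ⟨B⁻¹, _, 1, comm_mem R S a b, Or.inl rfl, rfl⟩⟩
  · exact ⟨(1 : FreeGroup (α ⊕ β)) * (A * B * A⁻¹ * B⁻¹) ^ (-1 : ℤ) * (1 : FreeGroup (α ⊕ β))⁻¹,
      by group, ⟨1, _, -1, comm_mem R S a b, Or.inr rfl, rfl⟩⟩

end Swap

variable (R S) in
theorem swap_word (b : β) (e : ℤ) (he : e = 1 ∨ e = -1) :
    ∀ M : List (α × Bool), ∃ c : FreeGroup (α ⊕ β),
      FreeGroup.of (Sum.inr b) ^ e * FreeGroup.map Sum.inl (FreeGroup.mk M) =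
        FreeGroup.map Sum.inl (FreeGroup.mk M) * FreeGroup.of (Sum.inr b) ^ e * c ∧
      AreaRep (ProdRels α β R S) c M.length := by
  intro M
  induction M with
  | nil =>
    refine ⟨1, ?_, areaRep_one _⟩
    have h1 : FreeGroup.mk ([] : List (α × Bool)) = 1 := rfl
    simp [h1]
  | cons x M ih =>
    obtain ⟨a, d⟩ := x
    obtain ⟨c₂, hc₂, hc₂'⟩ := ih
    obtain ⟨c₁, hc₁, hc₁'⟩ := swap_single R S a b (cond d (1 : ℤ) (-1)) e
      (by cases d <;> simp) he
    set u : FreeGroup (α ⊕ β) := FreeGroup.map Sum.inl (FreeGroup.mk M) with hu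
    have hmap : (FreeGroup.map Sum.inl (FreeGroup.mk ((a, d) :: M)) : FreeGroup (α ⊕ β)) =
        FreeGroup.of (Sum.inl a) ^ (cond d (1 : ℤ) (-1)) * u := by
      rw [mk_cons, MonoidHom.map_mul, mk_single, map_zpow, map.of]
    refine ⟨c₂ * (u⁻¹ * c₁ * u), ?_, ?_⟩
    · rw [hmap]
      calc FreeGroup.of (Sum.inr b) ^ e * (FreeGroup.of (Sum.inl a) ^ (cond d (1 : ℤ) (-1)) * u)
          = (FreeGroup.of (Sum.inr b) ^ e * FreeGroup.of (Sum.inl a) ^ (cond d (1 : ℤ) (-1))) * u := by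
            group
        _ = ((FreeGroup.of (Sum.inl a) ^ (cond d (1 : ℤ) (-1))) * FreeGroup.of (Sum.inr b) ^ e * c₁) * u := by
            rw [hc₁]
        _ = FreeGroup.of (Sum.inl a) ^ (cond d (1 : ℤ) (-1)) * (FreeGroup.of (Sum.inr b) ^ e * u) *
              (u⁻¹ * c₁ * u) := by group
        _ = FreeGroup.of (Sum.inl a) ^ (cond d (1 : ℤ) (-1)) * (u * FreeGroup.of (Sum.inr b) ^ e * c₂) *
              (u⁻¹ * c₁ * u) := by rw [hc₂]
        _ = FreeGroup.of (Sum.inl a) ^ (cond d (1 : ℤ) (-1)) * u * FreeGroup.of (Sum.inr b) ^ e *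
              (c₂ * (u⁻¹ * c₁ * u)) := by group
    · have : ((a, d) :: M).length = M.length + 1 := rfl
      rw [this]
      have := areaRep_mul hc₂' (areaRep_single (by
        have := isConjRel_conj hc₁' u⁻¹
        rwa [inv_inv] at this))
      exact this

variable (R S) in
theorem shuffle : ∀ L : List ((α ⊕ β) × Bool),
    ∃ (c : FreeGroup (α ⊕ β)) (k : ℕ),
      FreeGroup.mk L = FreeGroup.map Sum.inl (pA (FreeGroup.mk L)) *
        FreeGroup.map Sum.inr (pB (FreeGroup.mk L)) * c ∧
      AreaRep (ProdRels α β R S) c k ∧ k ≤ L.length * L.length := by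
  intro L
  induction L with
  | nil =>
    refine ⟨1, 0, ?_, areaRep_one _, le_refl _⟩
    have h1 : FreeGroup.mk ([] : List ((α ⊕ β) × Bool)) = 1 := rfl
    simp [h1]
  | cons x L ih =>
    obtain ⟨y, d⟩ := x
    obtain ⟨c, k, hw, hk, hkle⟩ := ih
    have hsplit := mk_cons (y, d) L
    have hlen : ((y, d) :: L).length = L.length + 1 := rfl
    set u : FreeGroup (α ⊕ β) := FreeGroup.map Sum.inl (pA (FreeGroup.mk L)) with hu
    set v : FreeGroup (α ⊕ β) := FreeGroup.map Sum.inr (pB (FreeGroup.mk L)) with hv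
    cases y with
    | inl a =>
      have hpa : pA (FreeGroup.mk ((Sum.inl a, d) :: L)) =
          FreeGroup.of a ^ (cond d (1 : ℤ) (-1)) * pA (FreeGroup.mk L) := by
        rw [hsplit, MonoidHom.map_mul, mk_single, map_zpow, pA_of_inl]
      have hpb : pB (FreeGroup.mk ((Sum.inl a, d) :: L)) = pB (FreeGroup.mk L) := by
        rw [hsplit, MonoidHom.map_mul, mk_single, map_zpow, pB_of_inl, one_zpow, one_mul]
      refine ⟨c, k, ?_, hk, ?_⟩
      · rw [hpa, hpb, MonoidHom.map_mul, map_zpow, map.of]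
        calc FreeGroup.mk ((Sum.inl a, d) :: L)
            = FreeGroup.of (Sum.inl a) ^ (cond d (1 : ℤ) (-1)) * FreeGroup.mk L := by
              rw [hsplit, mk_single]
          _ = FreeGroup.of (Sum.inl a) ^ (cond d (1 : ℤ) (-1)) * (u * v * c) :=
              congrArg _ hw
          _ = FreeGroup.of (Sum.inl a) ^ (cond d (1 : ℤ) (-1)) * u * v * c := by group
      · rw [hlen]; nlinarith
    | inr b =>
      obtain ⟨c₂, hc₂, hc₂'⟩ := swap_word R S b (cond d (1 : ℤ) (-1))
        (by cases d <;> simp) (pA (FreeGroup.mk L)).toWord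
      rw [mk_toWord] at hc₂
      rw [← hu] at hc₂
      have hpa : pA (FreeGroup.mk ((Sum.inr b, d) :: L)) = pA (FreeGroup.mk L) := by
        rw [hsplit, MonoidHom.map_mul, mk_single, map_zpow, pA_of_inr, one_zpow, one_mul]
      have hpb : pB (FreeGroup.mk ((Sum.inr b, d) :: L)) =
          FreeGroup.of b ^ (cond d (1 : ℤ) (-1)) * pB (FreeGroup.mk L) := by
        rw [hsplit, MonoidHom.map_mul, mk_single, map_zpow, pB_of_inr]
      refine ⟨(v⁻¹ * c₂ * v) * c, (pA (FreeGroup.mk L)).toWord.length + k, ?_, ?_, ?_⟩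
      · rw [hpa, hpb, MonoidHom.map_mul, map_zpow, map.of]
        calc FreeGroup.mk ((Sum.inr b, d) :: L)
            = FreeGroup.of (Sum.inr b) ^ (cond d (1 : ℤ) (-1)) * FreeGroup.mk L := by
              rw [hsplit, mk_single]
          _ = FreeGroup.of (Sum.inr b) ^ (cond d (1 : ℤ) (-1)) * (u * v * c) :=
              congrArg _ hw
          _ = (FreeGroup.of (Sum.inr b) ^ (cond d (1 : ℤ) (-1)) * u) * v * c := by group
          _ = (u * FreeGroup.of (Sum.inr b) ^ (cond d (1 : ℤ) (-1)) * c₂) * v * c := by rw [hc₂]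
          _ = u * (FreeGroup.of (Sum.inr b) ^ (cond d (1 : ℤ) (-1)) * v) *
                ((v⁻¹ * c₂ * v) * c) := by group
      · refine areaRep_mul ?_ hk
        have := areaRep_conj v⁻¹ hc₂'
        rwa [inv_inv] at this
      · rw [hlen]
        have h1 : (pA (FreeGroup.mk L)).toWord.length ≤ L.length := norm_pA_le L
        nlinarith

theorem pA_rel {R : Set (FreeGroup α)} {S : Set (FreeGroup β)} {r : FreeGroup (α ⊕ β)}
    (hr : r ∈ ProdRels α β R S) : pA r ∈ R ∨ pA r = 1 := by
  rcases hr with (⟨r', hr', rfl⟩ | ⟨s, hs, rfl⟩) | ⟨a, b, rfl⟩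
  · exact Or.inl (by rw [pA_inl]; exact hr')
  · exact Or.inr (pA_inr s)
  · refine Or.inr ?_
    simp only [MonoidHom.map_mul, MonoidHom.map_inv, pA_of_inl, pA_of_inr]
    group

theorem pB_rel {R : Set (FreeGroup α)} {S : Set (FreeGroup β)} {r : FreeGroup (α ⊕ β)}
    (hr : r ∈ ProdRels α β R S) : pB r ∈ S ∨ pB r = 1 := by
  rcases hr with (⟨r', hr', rfl⟩ | ⟨s, hs, rfl⟩) | ⟨a, b, rfl⟩
  · exact Or.inr (pB_inl r')
  · exact Or.inl (by rw [pB_inr]; exact hs)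
  · refine Or.inr ?_
    simp only [MonoidHom.map_mul, MonoidHom.map_inv, pB_of_inl, pB_of_inr]
    group

theorem exists_areaRep_pA {R : Set (FreeGroup α)} {S : Set (FreeGroup β)}
    {w : FreeGroup (α ⊕ β)} {k : ℕ} (h : AreaRep (ProdRels α β R S) w k) :
    ∃ k', AreaRep R (pA w : FreeGroup α) k' := by
  obtain ⟨L, -, hm, rfl⟩ := areaRep_iff.1 h
  rw [map_list_prod]
  apply exists_areaRep_of_forall
  intro x hx
  obtain ⟨y, hy, rfl⟩ := List.mem_map.1 hx
  obtain ⟨g, r, e, hr, he, rfl⟩ := hm y hy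
  rcases pA_rel hr with h1 | h1
  · exact Or.inl ⟨pA g, pA r, e, h1, he,
      by rw [MonoidHom.map_mul, MonoidHom.map_mul, map_zpow, MonoidHom.map_inv]⟩
  · right
    rw [MonoidHom.map_mul, MonoidHom.map_mul, map_zpow, MonoidHom.map_inv, h1]
    group

theorem exists_areaRep_pB {R : Set (FreeGroup α)} {S : Set (FreeGroup β)}
    {w : FreeGroup (α ⊕ β)} {k : ℕ} (h : AreaRep (ProdRels α β R S) w k) :
    ∃ k', AreaRep S (pB w : FreeGroup β) k' := by
  obtain ⟨L, -, hm, rfl⟩ := areaRep_iff.1 h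
  rw [map_list_prod]
  apply exists_areaRep_of_forall
  intro x hx
  obtain ⟨y, hy, rfl⟩ := List.mem_map.1 hx
  obtain ⟨g, r, e, hr, he, rfl⟩ := hm y hy
  rcases pB_rel hr with h1 | h1
  · exact Or.inl ⟨pB g, pB r, e, h1, he,
      by rw [MonoidHom.map_mul, MonoidHom.map_mul, map_zpow, MonoidHom.map_inv]⟩
  · right
    rw [MonoidHom.map_mul, MonoidHom.map_mul, map_zpow, MonoidHom.map_inv, h1]
    group

theorem bddAbove_dehnSet (γ : Type*) [Finite γ] [DecidableEq γ]
    (rels : Set (FreeGroup γ)) (n : ℕ) :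
    BddAbove {a | ∃ w : FreeGroup γ,
      (FreeGroup.toWord w).length ≤ n ∧ (∃ k, AreaRep rels w k) ∧ a = GArea rels w} := by
  have hfin : {w : FreeGroup γ | (FreeGroup.toWord w).length ≤ n}.Finite := by
    have hsub : {w : FreeGroup γ | (FreeGroup.toWord w).length ≤ n} ⊆
        FreeGroup.toWord ⁻¹' {l | l.length ≤ n} := fun w hw => hw
    exact ((List.finite_length_le ((γ × Bool)) n).preimage
      (Set.injOn_of_injective FreeGroup.toWord_injective)).subset hsub
  refine ((hfin.image (GArea rels)).subset ?_).bddAbove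
  rintro a ⟨w, hw, -, rfl⟩
  exact ⟨w, hw, rfl⟩

end DehnAux

/-- Brick: `δ_{G×H} ≼ n² + δ_G + δ_H` for finitely presented `G`, `H`. -/
theorem dehn_product_upper (α β : Type) [Finite α] [Finite β]
    [DecidableEq α] [DecidableEq β]
    (R : Set (FreeGroup α)) (S : Set (FreeGroup β)) (hR : R.Finite) (hS : S.Finite) :
    DehnPreceq (DehnFunction (α ⊕ β) (ProdRels α β R S))
      (fun n => n ^ 2 + DehnFunction α R n + DehnFunction β S n) := by
  classical
  refine ⟨1, one_pos, fun n => ?_⟩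
  simp only [one_mul]
  apply csSup_le'
  rintro a ⟨w, hlen, ⟨k0, hk0⟩, rfl⟩
  -- shuffle the word into A-part, B-part and commutator garbage
  obtain ⟨c, kc, hw, hkc, hkcle⟩ := DehnAux.shuffle R S (FreeGroup.toWord w)
  rw [FreeGroup.mk_toWord] at hw
  -- the two projections are trivial words
  have hA : ∃ k, AreaRep R (DehnAux.pA w) k := DehnAux.exists_areaRep_pA hk0
  have hB : ∃ k, AreaRep S (DehnAux.pB w) k := DehnAux.exists_areaRep_pB hk0
  have hAa : AreaRep R (DehnAux.pA w) (GArea R (DehnAux.pA w)) := Nat.sInf_mem hA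
  have hBa : AreaRep S (DehnAux.pB w) (GArea S (DehnAux.pB w)) := Nat.sInf_mem hB
  -- length bounds on the projections
  have hnA : (FreeGroup.toWord (DehnAux.pA w)).length ≤ n := by
    have h1 := DehnAux.norm_pA_le (FreeGroup.toWord w)
    rw [FreeGroup.mk_toWord] at h1
    exact le_trans h1 hlen
  have hnB : (FreeGroup.toWord (DehnAux.pB w)).length ≤ n := by
    have h1 := DehnAux.norm_pB_le (FreeGroup.toWord w)
    rw [FreeGroup.mk_toWord] at h1
    exact le_trans h1 hlen
  -- the areas of the projections are bounded by the Dehn functions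
  have hmemA : GArea R (DehnAux.pA w) ≤ DehnFunction α R n :=
    le_csSup (DehnAux.bddAbove_dehnSet α R n) ⟨DehnAux.pA w, hnA, hA, rfl⟩
  have hmemB : GArea S (DehnAux.pB w) ≤ DehnFunction β S n :=
    le_csSup (DehnAux.bddAbove_dehnSet β S n) ⟨DehnAux.pB w, hnB, hB, rfl⟩
  -- transport the fillings of the projections into the product presentation
  have hrepA : AreaRep (ProdRels α β R S) (FreeGroup.map Sum.inl (DehnAux.pA w))
      (GArea R (DehnAux.pA w)) :=
    DehnAux.areaRep_map (FreeGroup.map Sum.inl)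
      (fun r hr => Or.inl (Or.inl ⟨r, hr, rfl⟩)) hAa
  have hrepB : AreaRep (ProdRels α β R S) (FreeGroup.map Sum.inr (DehnAux.pB w))
      (GArea S (DehnAux.pB w)) :=
    DehnAux.areaRep_map (FreeGroup.map Sum.inr)
      (fun s hs => Or.inl (Or.inr ⟨s, hs, rfl⟩)) hBa
  have hrepw : AreaRep (ProdRels α β R S) w
      (GArea R (DehnAux.pA w) + GArea S (DehnAux.pB w) + kc) := by
    have h2 := DehnAux.areaRep_mul (DehnAux.areaRep_mul hrepA hrepB) hkc
    rwa [← hw] at h2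
  have harea : GArea (ProdRels α β R S) w ≤
      GArea R (DehnAux.pA w) + GArea S (DehnAux.pB w) + kc :=
    Nat.sInf_le hrepw
  have hkc2 : kc ≤ n ^ 2 := by
    refine le_trans hkcle ?_
    rw [pow_two]
    exact Nat.mul_le_mul hlen hlen
  omega
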